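/- Let S³ act smoothly on a connected closed manifold Z, fix S¹ ↪ S³, let S → Z be a U(1)-principal bundle to which the S³-action is lifted, let F be a connected manifold with a U(1)-action, and let M := S ×_{U(1)} F. For each connected component Y of Z^{S¹} let a_Y be the weight of the S¹-action on S over Y. If none of the weights a_Y vanish, and if the S¹-action on Z and the U(1)-action on F both have only isolated fixed points, then the induced S¹-action on M has only isolated fixed points. -/

import Mathlib

open Manifold

noncomputable section

/-- `S³` modeled as the compact Lie group of unit quaternions (isomorphic to `SU(2)`). -/
abbrev S3 : Type := Metric.sphere (0 : Quaternion ℝ) 1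

/-- A bundled connected smooth manifold of dimension `m` (not necessarily compact). -/
structure ConnManifold (m : ℕ) : Type 1 where
  M : Type
  [top : TopologicalSpace M]
  [charted : ChartedSpace (EuclideanSpace ℝ (Fin m)) M]
  [smooth : IsManifold (𝓡 m) (⊤ : ℕ∞) M]
  [connected : ConnectedSpace M]

attribute [instance] ConnManifold.top ConnManifold.charted ConnManifold.smooth
  ConnManifold.connected

/-- A smooth action of a topological group `G` on the manifold `X`. -/
structure SmoothAction (m : ℕ) (G : Type) [Group G] [TopologicalSpace G]
    (X : ConnManifold m) : Type where
  act : G → X.M → X.M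
  one_act : ∀ x, act 1 x = x
  mul_act : ∀ g h x, act (g * h) x = act g (act h x)
  smooth : ∀ g, ContMDiff (𝓡 m) (𝓡 m) (⊤ : ℕ∞) (act g)
  cont : Continuous fun p : G × X.M => act p.1 p.2

section Assoc

variable (S F : Type) (actS : Circle → S → S) (actF : Circle → F → F)

/-- the equivalence defining the associated bundle `M = S ×_{U(1)} F`:
`(s·g, f) ∼ (s, g·f)` -/
def AssocRel : (S × F) → (S × F) → Prop :=
  fun q q' => ∃ g : Circle, (actS g q'.1, actF g⁻¹ q'.2) = q

/-- the total space `M = S ×_{U(1)} F` of the associated fibre bundle -/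
def AssocSpace : Type := Quot (AssocRel S F actS actF)

instance [TopologicalSpace S] [TopologicalSpace F] :
    TopologicalSpace (AssocSpace S F actS actF) := instTopologicalSpaceQuot

variable {S F actS actF} (actS3 : S3 → S → S) (ι : Circle →* S3)

/-- a point of `M = S ×_{U(1)} F` is fixed by the `S¹`-action induced (via
`ι : S¹ ↪ S³`) by the lifted `S³`-action `g·(s,f)_∼ = (g·s, f)_∼` -/
def IsS1FixedPt (x : AssocSpace S F actS actF) : Prop :=
  ∀ g : Circle, ∀ q : S × F, Quot.mk (AssocRel S F actS actF) q = x →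
    Quot.mk (AssocRel S F actS actF) (actS3 (ι g) q.1, q.2) = x

end Assoc

lemma circle_exp_zpow (t : ℝ) (n : ℤ) : Circle.exp t ^ n = Circle.exp (n * t) := by
  have := map_zsmul Circle.expHom n t
  simpa [zsmul_eq_mul, ← ofMul_zpow] using this.symm

lemma circle_zpow_surj (a : ℤ) (ha : a ≠ 0) : Function.Surjective (fun g : Circle => g ^ a) := by
  intro h
  refine ⟨Circle.exp (Complex.arg h / a), ?_⟩
  simp only [circle_exp_zpow]
  rw [mul_div_cancel₀ _ (by exact_mod_cast ha), Circle.exp_arg]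

lemma assocRel_equiv (S F : Type) (actS : Circle → S → S) (actF : Circle → F → F)
    (actS_one : ∀ s, actS 1 s = s)
    (actS_mul : ∀ g h s, actS (g * h) s = actS g (actS h s))
    (actF_one : ∀ f, actF 1 f = f)
    (actF_mul : ∀ g h f, actF (g * h) f = actF g (actF h f)) :
    Equivalence (AssocRel S F actS actF) := by
  constructor
  · rintro ⟨t, e⟩
    exact ⟨1, by simp [actS_one, actF_one]⟩
  · rintro ⟨t, e⟩ ⟨t', e'⟩ ⟨g, hg⟩
    obtain ⟨h1, h2⟩ := Prod.mk.injEq .. ▸ hg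
    refine ⟨g⁻¹, Prod.ext ?_ ?_⟩
    · simp only [← h1, ← actS_mul, inv_mul_cancel, actS_one]
    · simp only [← h2, ← actF_mul, inv_inv, mul_inv_cancel, actF_one]
  · rintro ⟨t, e⟩ ⟨t', e'⟩ ⟨t'', e''⟩ ⟨g, hg⟩ ⟨h, hh⟩
    obtain ⟨hg1, hg2⟩ := Prod.mk.injEq .. ▸ hg
    obtain ⟨hh1, hh2⟩ := Prod.mk.injEq .. ▸ hh
    refine ⟨g * h, Prod.ext ?_ ?_⟩
    · simp only [actS_mul, hh1, hg1]
    · simp only [mul_inv_rev, actF_mul, ← hg2, ← hh2]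
      rw [← actF_mul, ← actF_mul, mul_comm]

/-- **Lemma 4.3.**  Let `S³` act smoothly on a connected closed manifold `Z`, fix
`S¹ ↪ S³`, let `S → Z` be a `U(1)`-principal bundle to which the `S³`-action is
lifted, let `F` be a connected manifold with a smooth `U(1)`-action, and let
`M = S ×_{U(1)} F`.  If none of the weights `a_Y` of `S` at the components `Y` of
`Z^{S¹}` vanish, and the `S¹`-action on `Z` and the `U(1)`-action on `F` have only
isolated fixed points, then the induced `S¹`-action on `M` has only isolated
fixed points. -/
theorem statement13
    (dZ dF : ℕ) (Z : ConnManifold dZ) (hZc : CompactSpace Z.M)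
    (AZ : SmoothAction dZ S3 Z)
    (ι : Circle →* S3) (hι_cont : Continuous ι) (hι_inj : Function.Injective ι)
    -- `S → Z` is a `U(1)`-principal bundle:
    (S : Type) [TopologicalSpace S] (p : S → Z.M) (hp_cont : Continuous p)
    (hp_surj : Function.Surjective p) (hp_quot : Topology.IsQuotientMap p)
    (actS : Circle → S → S)
    (actS_one : ∀ s, actS 1 s = s)
    (actS_mul : ∀ g h s, actS (g * h) s = actS g (actS h s))
    (actS_cont : Continuous fun q : Circle × S => actS q.1 q.2)
    (actS_free : ∀ g s, actS g s = s → g = 1)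
    (hfib : ∀ s t : S, p s = p t ↔ ∃ g : Circle, actS g t = s)
    (htriv : ∀ z : Z.M, ∃ U : Set Z.M, IsOpen U ∧ z ∈ U ∧ ∃ ψ : S → Circle,
      ContinuousOn ψ (p ⁻¹' U) ∧
      (∀ (g : Circle) (s : S), p s ∈ U → ψ (actS g s) = g * ψ s) ∧
      ∀ z' ∈ U, ∀ c : Circle, ∃! s : S, p s = z' ∧ ψ s = c)
    -- the lift of the `S³`-action to `S`, commuting with the principal action:
    (actS3 : S3 → S → S)
    (actS3_one : ∀ s, actS3 1 s = s)
    (actS3_mul : ∀ g h s, actS3 (g * h) s = actS3 g (actS3 h s))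
    (actS3_cont : Continuous fun q : S3 × S => actS3 q.1 q.2)
    (actS3_proj : ∀ g s, p (actS3 g s) = AZ.act g (p s))
    (actS3_comm : ∀ g c s, actS3 g (actS c s) = actS c (actS3 g s))
    -- the fibre `F`, a connected manifold with smooth `U(1)`-action:
    (F : ConnManifold dF) (AF : SmoothAction dF Circle F)
    -- none of the weights `a_Y` vanishes: over every `S¹`-fixed point of `Z` the
    -- `S¹`-action on the fibre of `S` has character `λ ↦ λ^a` with `a ≠ 0`:
    (hweights : ∀ z : Z.M, (∀ g : Circle, AZ.act (ι g) z = z) →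
      ∃ a : ℤ, a ≠ 0 ∧ ∀ s, p s = z → ∀ g : Circle, actS3 (ι g) s = actS (g ^ a) s)
    -- the `S¹`-action on `Z` has only isolated fixed points:
    (hZiso : ∀ z : Z.M, (∀ g : Circle, AZ.act (ι g) z = z) →
      ∃ U ∈ nhds z, ∀ y ∈ U, (∀ g : Circle, AZ.act (ι g) y = y) → y = z)
    -- the `U(1)`-action on `F` has only isolated fixed points:
    (hFiso : ∀ f : F.M, (∀ g : Circle, AF.act g f = f) →
      ∃ U ∈ nhds f, ∀ y ∈ U, (∀ g : Circle, AF.act g y = y) → y = f) :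
    -- conclusion: the induced `S¹`-action on `M = S ×_{U(1)} F` has only
    -- isolated fixed points
    ∀ x : AssocSpace S F.M actS AF.act, IsS1FixedPt actS3 ι x →
      ∃ U ∈ nhds x, ∀ y ∈ U, IsS1FixedPt actS3 ι y → y = x := by
  classical
  have hequiv : Equivalence (AssocRel S F.M actS AF.act) :=
    assocRel_equiv S F.M actS AF.act actS_one actS_mul AF.one_act AF.mul_act
  have hmk : ∀ q q' : S × F.M,
      Quot.mk (AssocRel S F.M actS AF.act) q = Quot.mk (AssocRel S F.M actS AF.act) q' ↔
        AssocRel S F.M actS AF.act q q' :=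
    fun q q' => Quot.eq.trans hequiv.eqvGen_iff
  have hpact : ∀ (c : Circle) (t : S), p (actS c t) = p t :=
    fun c t => (hfib (actS c t) t).mpr ⟨c, rfl⟩
  intro x hx
  obtain ⟨⟨s, f⟩, rfl⟩ := Quot.exists_rep x
  -- generic consequence of fixedness: the base point is S¹-fixed
  have hbase : ∀ (t : S) (e : F.M),
      IsS1FixedPt actS3 ι (Quot.mk (AssocRel S F.M actS AF.act) (t, e)) →
      ∀ g : Circle, AZ.act (ι g) (p t) = p t := by
    intro t e hfix g
    obtain ⟨c, hc⟩ := (hmk _ _).mp (hfix g (t, e) rfl)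
    have h1 : actS c t = actS3 (ι g) t := congrArg Prod.fst hc
    calc AZ.act (ι g) (p t) = p (actS3 (ι g) t) := (actS3_proj _ _).symm
      _ = p (actS c t) := by rw [h1]
      _ = p t := hpact c t
  have hzfix : ∀ g : Circle, AZ.act (ι g) (p s) = p s := hbase s f hx
  obtain ⟨a, ha0, haw⟩ := hweights (p s) hzfix
  -- generic consequence of fixedness over `p s`: the fibre point is U(1)-fixed
  have key : ∀ (t : S) (e : F.M), p t = p s →
      IsS1FixedPt actS3 ι (Quot.mk (AssocRel S F.M actS AF.act) (t, e)) →
      ∀ g : Circle, AF.act g e = e := by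
    intro t e hpt hfix g
    obtain ⟨g', hg'⟩ := circle_zpow_surj (-a) (neg_ne_zero.mpr ha0) g
    simp only at hg'
    obtain ⟨c, hc⟩ := (hmk _ _).mp (hfix g' (t, e) rfl)
    have h1 : actS c t = actS3 (ι g') t := congrArg Prod.fst hc
    have h2 : AF.act c⁻¹ e = e := congrArg Prod.snd hc
    have h3 : actS c t = actS (g' ^ a) t := by rw [h1, haw t hpt g']
    have hceq : c = g' ^ a := by
      have h4 : actS ((g' ^ a)⁻¹ * c) t = t := by
        rw [actS_mul, h3, ← actS_mul, inv_mul_cancel, actS_one]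
      have h5 := actS_free _ _ h4
      exact (inv_mul_eq_one.mp h5).symm
    have h6 : g = c⁻¹ := by rw [hceq, ← zpow_neg, hg']
    rw [h6]; exact h2
  have hffix : ∀ g : Circle, AF.act g f = f := key s f rfl hx
  -- isolation data
  obtain ⟨UZ, hUZ, hUZiso⟩ := hZiso (p s) hzfix
  obtain ⟨U₀, hU₀open, hzU₀, ψ, hψcont, hψequi, -⟩ := htriv (p s)
  have hf₀fix : ∀ g : Circle, AF.act g (AF.act (ψ s) f) = AF.act (ψ s) f := by
    intro g
    rw [← AF.mul_act, mul_comm, AF.mul_act, hffix]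
  obtain ⟨UF, hUF, hUFiso⟩ := hFiso (AF.act (ψ s) f) hf₀fix
  obtain ⟨V, hVsub, hVopen, hzV⟩ := mem_nhds_iff.mp (Filter.inter_mem hUZ (hU₀open.mem_nhds hzU₀))
  obtain ⟨W, hWsub, hWopen, hfW⟩ := mem_nhds_iff.mp hUF
  -- the saturated open set upstairs
  set Upre : Set (S × F.M) := {q | p q.1 ∈ V ∧ AF.act (ψ q.1) q.2 ∈ W} with hUpre_def
  have hTopen : IsOpen {q : S × F.M | p q.1 ∈ U₀} :=
    hU₀open.preimage (hp_cont.comp continuous_fst)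
  have hhcont : ContinuousOn (fun q : S × F.M => AF.act (ψ q.1) q.2)
      {q : S × F.M | p q.1 ∈ U₀} := by
    have h1 : ContinuousOn (fun q : S × F.M => (ψ q.1, q.2)) {q : S × F.M | p q.1 ∈ U₀} := by
      refine ContinuousOn.prodMk ?_ continuous_snd.continuousOn
      exact hψcont.comp continuous_fst.continuousOn (fun q hq => hq)
    exact AF.cont.comp_continuousOn h1
  have hUpreOpen : IsOpen Upre := by
    have h2 : IsOpen ({q : S × F.M | p q.1 ∈ U₀} ∩
        (fun q : S × F.M => AF.act (ψ q.1) q.2) ⁻¹' W) :=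
      hhcont.isOpen_inter_preimage hTopen hWopen
    have h3 : Upre = ((fun q : S × F.M => p q.1) ⁻¹' V) ∩
        ({q : S × F.M | p q.1 ∈ U₀} ∩ (fun q : S × F.M => AF.act (ψ q.1) q.2) ⁻¹' W) := by
      ext ⟨t, e⟩
      simp only [hUpre_def, Set.mem_setOf_eq, Set.mem_inter_iff, Set.mem_preimage]
      exact ⟨fun ⟨h1, h2'⟩ => ⟨h1, (hVsub h1).2, h2'⟩, fun ⟨h1, _, h2'⟩ => ⟨h1, h2'⟩⟩
    rw [h3]
    exact (hVopen.preimage (hp_cont.comp continuous_fst)).inter h2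
  -- saturation
  have hkeyψ : ∀ (c : Circle) (t : S) (e : F.M), p t ∈ U₀ →
      AF.act (ψ (actS c t)) (AF.act c⁻¹ e) = AF.act (ψ t) e := by
    intro c t e ht
    rw [hψequi c t ht, ← AF.mul_act, mul_comm c (ψ t), mul_assoc, mul_inv_cancel, mul_one]
  have hsat : ∀ (c : Circle) (t : S) (e : F.M),
      (actS c t, AF.act c⁻¹ e) ∈ Upre ↔ (t, e) ∈ Upre := by
    intro c t e
    constructor
    · rintro ⟨h1, h2⟩
      have hpt : p (actS c t) = p t := hpact c t
      rw [hpt] at h1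
      refine ⟨h1, ?_⟩
      rw [← hkeyψ c t e (hVsub h1).2]
      exact h2
    · rintro ⟨h1, h2⟩
      refine ⟨by rw [hpact]; exact h1, ?_⟩
      rw [hkeyψ c t e (hVsub h1).2]
      exact h2
  have hpre : Quot.mk (AssocRel S F.M actS AF.act) ⁻¹'
      (Quot.mk (AssocRel S F.M actS AF.act) '' Upre) = Upre := by
    ext ⟨t, e⟩
    simp only [Set.mem_preimage, Set.mem_image]
    constructor
    · rintro ⟨q', hq', heq⟩
      obtain ⟨c, hc⟩ := (hmk _ _).mp heq
      rw [← hc] at hq'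
      exact (hsat c t e).mp hq'
    · intro h
      exact ⟨(t, e), h, rfl⟩
  refine ⟨Quot.mk (AssocRel S F.M actS AF.act) '' Upre, ?_, ?_⟩
  · have hopen : IsOpen (Quot.mk (AssocRel S F.M actS AF.act) '' Upre) :=
      isQuotientMap_quot_mk.isOpen_preimage.mp (by rw [hpre]; exact hUpreOpen)
    exact hopen.mem_nhds ⟨(s, f), ⟨hzV, hfW⟩, rfl⟩
  · rintro y ⟨⟨t, e⟩, ⟨htV, htW⟩, rfl⟩ hyfix
    have hptfix : ∀ g : Circle, AZ.act (ι g) (p t) = p t := hbase t e hyfix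
    have hptz : p t = p s := hUZiso (p t) (hVsub htV).1 hptfix
    have hefix : ∀ g : Circle, AF.act g e = e := key t e hptz hyfix
    have he'fix : ∀ g : Circle, AF.act g (AF.act (ψ t) e) = AF.act (ψ t) e := by
      intro g
      rw [← AF.mul_act, mul_comm, AF.mul_act, hefix]
    have he' : AF.act (ψ t) e = AF.act (ψ s) f := hUFiso _ (hWsub htW) he'fix
    obtain ⟨c, hc⟩ := (hfib t s).mp hptz
    have hψt : ψ t = c * ψ s := by rw [← hc, hψequi c s hzU₀]
    have h4 : AF.act c e = f := by
      have h5 : AF.act (c * ψ s) e = AF.act (ψ s) f := by rw [← hψt, he']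
      have h6 := congrArg (AF.act (ψ s)⁻¹) h5
      rw [← AF.mul_act, ← AF.mul_act, inv_mul_cancel, AF.one_act] at h6
      rw [← h6, mul_comm c (ψ s), ← mul_assoc, inv_mul_cancel, one_mul]
    have he : AF.act c⁻¹ f = e := by
      rw [← h4, ← AF.mul_act, inv_mul_cancel, AF.one_act]
    exact Quot.sound ⟨c, by rw [hc, he]⟩
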